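/- Suppose the process is regular. If π is a deterministic policy, then its state-action frequency vector x_π is a basic feasible solution (a vertex) of the state-action frequency polytope P; conversely, if x is a basic feasible solution of P, then the corresponding regular policy π^x is deterministic. -/

import Mathlib

open Finset

/-- A finite-horizon MDP with `N` states, horizon `T` (epochs `0,…,T-1`, so `T ≥ 2` has at
least one decision epoch), action sets `Fin (k s)` for each state `s`, and transition
probabilities `p t s a j = p_t(j | s, a)` governing the move from epoch `t` to `t+1`,
together with a strictly positive initial distribution `α`. -/
structure MDP (N T : ℕ) (k : Fin N → ℕ) : Type where
  p : ℕ → (s : Fin N) → Fin (k s) → Fin N → ℝ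
  α : Fin N → ℝ
  p_nonneg : ∀ t s a j, 0 ≤ p t s a j
  p_sum : ∀ t s a, ∑ j, p t s a j = 1
  α_pos : ∀ s, 0 < α s
  α_sum : ∑ s, α s = 1

/-- A (randomized, Markov, non-stationary) policy: `q t s a` is the probability that
action `a` is chosen in state `s` at decision epoch `t`. -/
structure Policy (N : ℕ) (k : Fin N → ℕ) : Type where
  q : ℕ → (s : Fin N) → Fin (k s) → ℝ
  q_nonneg : ∀ t s a, 0 ≤ q t s a
  q_sum : ∀ t s, ∑ a, q t s a = 1

variable {N T : ℕ} {k : Fin N → ℕ}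

/-- `condProb M π j t s` is `P^π(S_t = s | S_0 = j)` (epochs indexed from 0). -/
def condProb (M : MDP N T k) (π : Policy N k) (j : Fin N) : ℕ → Fin N → ℝ
  | 0, s => if s = j then 1 else 0
  | t+1, s => ∑ s', ∑ a, condProb M π j t s' * π.q t s' a * M.p t s' a s

/-- The state-action frequency `x_{π,t}(s,a) = ∑_j α(j) P^π(S_t = s, A_t = a | S_0 = j)`
(epochs indexed from 0, so the decision epochs are `0,…,T-2`). -/
def xsa (M : MDP N T k) (π : Policy N k) (t : ℕ) (s : Fin N) (a : Fin (k s)) : ℝ :=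
  ∑ j, M.α j * condProb M π j t s * π.q t s a

/-- The terminal state frequency `x_{π,T}(s)` (terminal epoch is `T-1` in 0-based indexing). -/
def xT (M : MDP N T k) (π : Policy N k) (s : Fin N) : ℝ :=
  ∑ j, M.α j * condProb M π j (T-1) s

variable (TT : ℕ)

/-- The finite-dimensional space housing state-action frequency vectors for a horizon
`TT + 2` process: a component `x.1 t s a` for every decision epoch `t ∈ {0,…,TT}`, state
`s` and action `a`, and a terminal component `x.2 s` for every state `s`. -/
abbrev FreqSpace (N : ℕ) (k : Fin N → ℕ) (TT : ℕ) : Type :=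
  (Fin (TT+1) → (s : Fin N) → Fin (k s) → ℝ) × (Fin N → ℝ)

/-- Membership in the state-action frequency polytope `P`: nonnegativity together with the
initial condition (a), flow conservation (b), and the terminal condition (c). -/
def inP {N : ℕ} {k : Fin N → ℕ} {TT : ℕ} (M : MDP N (TT+2) k)
    (x : FreqSpace N k TT) : Prop :=
  (∀ t s a, 0 ≤ x.1 t s a) ∧ (∀ s, 0 ≤ x.2 s) ∧
  (∀ j, ∑ a, x.1 0 j a = M.α j) ∧
  (∀ (t : Fin TT) (j : Fin N),
    ∑ a, x.1 t.succ j a = ∑ s, ∑ a, M.p (t : ℕ) s a j * x.1 t.castSucc s a) ∧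
  (∀ j, x.2 j = ∑ s, ∑ a, M.p TT s a j * x.1 (Fin.last TT) s a)

/-- The state-action frequency polytope `P`. -/
def Pset {N : ℕ} {k : Fin N → ℕ} {TT : ℕ} (M : MDP N (TT+2) k) :
    Set (FreqSpace N k TT) :=
  {x | inP M x}

/-- The state-action frequency vector `x_π` of a policy, as a point of `FreqSpace`. -/
def xvec {N : ℕ} {k : Fin N → ℕ} {TT : ℕ} (M : MDP N (TT+2) k) (π : Policy N k) :
    FreqSpace N k TT :=
  (fun t s a => xsa M π (t : ℕ) s a, fun s => xT M π s)

/-- The process is regular when every policy can reach every state at every epoch. -/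
def RegularProcess {N : ℕ} {k : Fin N → ℕ} {TT : ℕ} (M : MDP N (TT+2) k) : Prop :=
  ∀ (π : Policy N k) (t : ℕ) (s : Fin N), t ≤ TT + 1 → ∃ j, 0 < condProb M π j t s

/-- A policy is deterministic (up to the horizon) if at every decision epoch and state it
puts probability one on a single action. -/
def Deterministic {N : ℕ} (k : Fin N → ℕ) (TT : ℕ) (π : Policy N k) : Prop :=
  ∀ t s, t ≤ TT → ∃ a, π.q t s a = 1

/-- A policy is regular if at every decision epoch and every state unreachable there, it
puts full mass on the first action. -/
def RegularPol {N : ℕ} {k : Fin N → ℕ} {TT : ℕ} (M : MDP N (TT+2) k)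
    (hk : ∀ s, 1 ≤ k s) (π : Policy N k) : Prop :=
  ∀ t s, t ≤ TT → (∀ j, condProb M π j t s = 0) → π.q t s ⟨0, hk s⟩ = 1


section Aux

variable {N TT : ℕ} {k : Fin N → ℕ}

lemma condProb_nonneg (M : MDP N T k) (π : Policy N k) (j : Fin N) (t : ℕ) (s : Fin N) :
    0 ≤ condProb M π j t s := by
  induction t generalizing s with
  | zero => simp [condProb]; split <;> norm_num
  | succ t ih =>
    simp only [condProb]
    refine Finset.sum_nonneg fun s' _ => Finset.sum_nonneg fun a _ => ?_
    exact mul_nonneg (mul_nonneg (ih s') (π.q_nonneg t s' a)) (M.p_nonneg t s' a _)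

/-- total mass at state `s` at epoch `t` -/
def ysum (M : MDP N T k) (π : Policy N k) (t : ℕ) (s : Fin N) : ℝ :=
  ∑ j, M.α j * condProb M π j t s

lemma ysum_nonneg (M : MDP N T k) (π : Policy N k) (t : ℕ) (s : Fin N) :
    0 ≤ ysum M π t s :=
  Finset.sum_nonneg fun j _ => mul_nonneg (M.α_pos j).le (condProb_nonneg M π j t s)

lemma xsa_eq (M : MDP N T k) (π : Policy N k) (t : ℕ) (s : Fin N) (a : Fin (k s)) :
    xsa M π t s a = ysum M π t s * π.q t s a := by
  rw [xsa, ysum, Finset.sum_mul]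

lemma ysum_zero (M : MDP N T k) (π : Policy N k) (s : Fin N) :
    ysum M π 0 s = M.α s := by
  rw [ysum]
  rw [Finset.sum_eq_single s]
  · simp [condProb]
  · intro j _ hj
    simp [condProb, Ne.symm hj]
  · simp

lemma ysum_succ (M : MDP N T k) (π : Policy N k) (t : ℕ) (j : Fin N) :
    ysum M π (t+1) j = ∑ s, ∑ a, M.p t s a j * xsa M π t s a := by
  rw [ysum]
  simp only [condProb, Finset.mul_sum, xsa, Finset.sum_mul]
  rw [Finset.sum_comm]
  refine Finset.sum_congr rfl fun s _ => ?_
  rw [Finset.sum_comm]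
  refine Finset.sum_congr rfl fun a _ => ?_
  refine Finset.sum_congr rfl fun i _ => ?_
  ring

lemma xsa_sum (M : MDP N T k) (π : Policy N k) (t : ℕ) (s : Fin N) :
    ∑ a, xsa M π t s a = ysum M π t s := by
  simp only [xsa_eq]
  rw [← Finset.mul_sum, π.q_sum, mul_one]

end Aux
section Aux2
variable {N TT : ℕ} {k : Fin N → ℕ}

lemma ysum_pos (M : MDP N (TT+2) k) (hreg : RegularProcess M) (π : Policy N k)
    (t : ℕ) (ht : t ≤ TT + 1) (s : Fin N) : 0 < ysum M π t s := by
  obtain ⟨j, hj⟩ := hreg π t s ht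
  refine Finset.sum_pos' (fun i _ => mul_nonneg (M.α_pos i).le (condProb_nonneg M π i t s)) ?_
  exact ⟨j, Finset.mem_univ j, mul_pos (M.α_pos j) hj⟩

lemma xT_eq_ysum (M : MDP N (TT+2) k) (π : Policy N k) (s : Fin N) :
    xT M π s = ysum M π (TT+1) s := by
  rw [xT, ysum]
  norm_num

lemma xvec_mem (M : MDP N (TT+2) k) (π : Policy N k) : xvec M π ∈ Pset M := by
  refine ⟨fun t s a => ?_, fun s => ?_, fun j => ?_, fun t j => ?_, fun j => ?_⟩
  · exact mul_nonneg (ysum_nonneg M π _ s) (π.q_nonneg _ s a) |>.trans_eq (xsa_eq M π _ s a).symm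
  · simp only [xvec, xT_eq_ysum]
    exact ysum_nonneg M π _ s
  · show ∑ a, xsa M π ((0 : Fin (TT+1)) : ℕ) j a = M.α j
    rw [xsa_sum]
    exact ysum_zero M π j
  · show ∑ a, xsa M π ((t.succ : Fin (TT+1)) : ℕ) j a
      = ∑ s, ∑ a, M.p (t : ℕ) s a j * xsa M π ((t.castSucc : Fin (TT+1)) : ℕ) s a
    rw [xsa_sum]
    simp only [Fin.val_succ, Fin.coe_castSucc]
    exact ysum_succ M π t j
  · show xT M π j = ∑ s, ∑ a, M.p TT s a j * xsa M π ((Fin.last TT : Fin (TT+1)) : ℕ) s a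
    rw [xT_eq_ysum]
    simp only [Fin.val_last]
    exact ysum_succ M π TT j

lemma condProb_congr (M : MDP N T k) (π π' : Policy N k) (j : Fin N) (t : ℕ)
    (h : ∀ u, u < t → ∀ s a, π.q u s a = π'.q u s a) (s : Fin N) :
    condProb M π j t s = condProb M π' j t s := by
  induction t generalizing s with
  | zero => rfl
  | succ t ih =>
    simp only [condProb]
    refine Finset.sum_congr rfl fun s' _ => Finset.sum_congr rfl fun a _ => ?_
    rw [ih (fun u hu => h u (hu.trans (Nat.lt_succ_self t))) s',
      h t (Nat.lt_succ_self t) s' a]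

end Aux2
section Aux3
variable {N TT : ℕ} {k : Fin N → ℕ}

lemma condProb_combine (M : MDP N T k) (π πp πm : Policy N k) (t₀ : ℕ) (s₀ : Fin N)
    (θp θm : ℝ) (hθ : θp + θm = 1)
    (hagree : ∀ u s, ¬(u = t₀ ∧ s = s₀) →
      ∀ a, π.q u s a = πp.q u s a ∧ π.q u s a = πm.q u s a)
    (hrow : ∀ a, π.q t₀ s₀ a = θp * πp.q t₀ s₀ a + θm * πm.q t₀ s₀ a)
    (j : Fin N) (t : ℕ) (s : Fin N) :
    condProb M π j t s = θp * condProb M πp j t s + θm * condProb M πm j t s := by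
  have key : ∀ u, u ≤ t₀ → ∀ s', condProb M π j u s' = condProb M πp j u s' ∧
      condProb M π j u s' = condProb M πm j u s' := by
    intro u hu s'
    have hne : ∀ v, v < u → ∀ s : Fin N, ¬(v = t₀ ∧ s = s₀) := by
      intro v hv s hh
      rw [hh.1] at hv; omega
    constructor
    · exact condProb_congr M π πp j u (fun v hv s a => (hagree v s (hne v hv s) a).1) s'
    · exact condProb_congr M π πm j u (fun v hv s a => (hagree v s (hne v hv s) a).2) s'
  induction t generalizing s with
  | zero =>
    simp only [condProb]
    split <;> linarith
  | succ t ih =>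
    rcases le_or_gt (t+1) t₀ with h | h
    · obtain ⟨h1, h2⟩ := key (t+1) h s
      rw [← h1, ← h2]
      linear_combination (-(condProb M π j (t + 1) s)) * hθ
    · -- t ≥ t₀
      simp only [condProb, Finset.mul_sum, ← Finset.sum_add_distrib]
      refine Finset.sum_congr rfl fun s' _ => Finset.sum_congr rfl fun a _ => ?_
      by_cases hts : t = t₀ ∧ s' = s₀
      · obtain ⟨ht, hs⟩ := hts
        subst ht; subst hs
        obtain ⟨h1, h2⟩ := key t le_rfl s'
        rw [hrow a, ← h1, ← h2]
        ring
      · obtain ⟨hq1, hq2⟩ := hagree t s' hts a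
        rw [ih s', ← hq1, ← hq2]
        ring

lemma xvec_combine (M : MDP N (TT+2) k) (π πp πm : Policy N k) (t₀ : ℕ) (s₀ : Fin N)
    (θp θm : ℝ) (hθ : θp + θm = 1)
    (hagree : ∀ u s, ¬(u = t₀ ∧ s = s₀) →
      ∀ a, π.q u s a = πp.q u s a ∧ π.q u s a = πm.q u s a)
    (hrow : ∀ a, π.q t₀ s₀ a = θp * πp.q t₀ s₀ a + θm * πm.q t₀ s₀ a) :
    xvec (TT := TT) M π = θp • xvec M πp + θm • xvec M πm := by
  have hc := condProb_combine M π πp πm t₀ s₀ θp θm hθ hagree hrow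
  have hrow' : ∀ (t : ℕ) (s : Fin N) (a : Fin (k s)),
      (condProb M π · t s) = (condProb M πp · t s) ∧ (condProb M π · t s) = (condProb M πm · t s) ∧
        π.q t s a = θp * πp.q t s a + θm * πm.q t s a ∨
      π.q t s a = πp.q t s a ∧ π.q t s a = πm.q t s a := by
    intro t s a
    by_cases h : t = t₀ ∧ s = s₀
    · obtain ⟨ht, hs⟩ := h; subst ht; subst hs
      left
      have key : ∀ j, condProb M π j t s = condProb M πp j t s ∧
          condProb M π j t s = condProb M πm j t s := by
        intro j
        constructor
        · refine condProb_congr M π πp j t (fun v hv s' a' => (hagree v s' ?_ a').1) s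
          intro hh; rw [hh.1] at hv; omega
        · refine condProb_congr M π πm j t (fun v hv s' a' => (hagree v s' ?_ a').2) s
          intro hh; rw [hh.1] at hv; omega
      exact ⟨funext fun j => (key j).1, funext fun j => (key j).2, hrow a⟩
    · right; exact hagree t s h a
  have hxsa : ∀ (t : ℕ) (s : Fin N) (a : Fin (k s)),
      xsa M π t s a = θp * xsa M πp t s a + θm * xsa M πm t s a := by
    intro t s a
    simp only [xsa, Finset.mul_sum, ← Finset.sum_add_distrib]
    refine Finset.sum_congr rfl fun j _ => ?_
    rcases hrow' t s a with ⟨h1, h2, h3⟩ | ⟨h1, h2⟩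
    · rw [h3, ← congrFun h1 j, ← congrFun h2 j]; ring
    · rw [hc j t s, ← h1, ← h2]; ring
  refine Prod.ext ?_ ?_
  · funext t s a
    simpa [xvec] using hxsa (t : ℕ) s a
  · funext s
    have : xT (T := TT+2) M π s = θp * xT M πp s + θm * xT M πm s := by
      simp only [xT, Finset.mul_sum, ← Finset.sum_add_distrib]
      refine Finset.sum_congr rfl fun j _ => ?_
      rw [hc j (TT+2-1) s]; ring
    simpa [xvec] using this
end Aux3
section Aux4
variable {N TT : ℕ} {k : Fin N → ℕ}

/-- The policy `π^x` associated to a point of the polytope. -/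
noncomputable def polx (M : MDP N (TT+2) k) (hk : ∀ s, 1 ≤ k s) (x : FreqSpace N k TT)
    (hx : inP M x) : Policy N k where
  q := fun t s a =>
    if h : t ≤ TT then
      (if 0 < ∑ a', x.1 ⟨t, Nat.lt_succ_of_le h⟩ s a' then
        x.1 ⟨t, Nat.lt_succ_of_le h⟩ s a / ∑ a', x.1 ⟨t, Nat.lt_succ_of_le h⟩ s a'
      else if a = ⟨0, hk s⟩ then 1 else 0)
    else if a = ⟨0, hk s⟩ then 1 else 0
  q_nonneg := by
    intro t s a
    by_cases h : t ≤ TT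
    · rw [dif_pos h]
      by_cases h2 : 0 < ∑ a', x.1 ⟨t, Nat.lt_succ_of_le h⟩ s a'
      · rw [if_pos h2]
        exact div_nonneg (hx.1 _ s a) h2.le
      · rw [if_neg h2]; split <;> norm_num
    · rw [dif_neg h]; split <;> norm_num
  q_sum := by
    intro t s
    by_cases h : t ≤ TT
    · simp only [dif_pos h]
      by_cases h2 : 0 < ∑ a', x.1 ⟨t, Nat.lt_succ_of_le h⟩ s a'
      · simp only [if_pos h2]
        rw [← Finset.sum_div, div_self (ne_of_gt h2)]
      · simp only [if_neg h2]
        simp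
    · simp only [dif_neg h]
      simp

lemma polx_q_pos (M : MDP N (TT+2) k) (hk : ∀ s, 1 ≤ k s) (x : FreqSpace N k TT)
    (hx : inP M x) {t : ℕ} (h : t ≤ TT) {s : Fin N}
    (h2 : 0 < ∑ a', x.1 ⟨t, Nat.lt_succ_of_le h⟩ s a') (a : Fin (k s)) :
    (polx M hk x hx).q t s a
      = x.1 ⟨t, Nat.lt_succ_of_le h⟩ s a / ∑ a', x.1 ⟨t, Nat.lt_succ_of_le h⟩ s a' := by
  simp only [polx, dif_pos h, if_pos h2]

lemma ysum_polx (M : MDP N (TT+2) k) (hreg : RegularProcess M) (hk : ∀ s, 1 ≤ k s)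
    (x : FreqSpace N k TT) (hx : inP M x) :
    ∀ t (h : t ≤ TT) (s : Fin N),
      ysum M (polx M hk x hx) t s = ∑ a, x.1 ⟨t, Nat.lt_succ_of_le h⟩ s a := by
  intro t
  induction t with
  | zero =>
    intro h s
    rw [ysum_zero, ← hx.2.2.1 s]
    rfl
  | succ t ih =>
    intro h s
    have ht : t ≤ TT := Nat.le_of_succ_le h
    have hpos : ∀ s' : Fin N, 0 < ∑ a, x.1 ⟨t, Nat.lt_succ_of_le ht⟩ s' a := fun s' =>
      ih ht s' ▸ ysum_pos M hreg _ t (by omega) s'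
    have hxsa : ∀ (s' : Fin N) (a : Fin (k s')),
        xsa M (polx M hk x hx) t s' a = x.1 ⟨t, Nat.lt_succ_of_le ht⟩ s' a := by
      intro s' a
      rw [xsa_eq, polx_q_pos M hk x hx ht (hpos s') a, ih ht s']
      rw [mul_div_assoc']
      exact mul_div_cancel_left₀ _ (ne_of_gt (hpos s'))
    rw [ysum_succ]
    simp only [hxsa]
    have := (hx.2.2.2.1 ⟨t, Nat.lt_of_succ_le h⟩ s).symm
    convert this using 2 <;> rfl

lemma xvec_polx (M : MDP N (TT+2) k) (hreg : RegularProcess M) (hk : ∀ s, 1 ≤ k s)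
    (x : FreqSpace N k TT) (hx : inP M x) : xvec M (polx M hk x hx) = x := by
  have hxsa : ∀ (t : ℕ) (h : t ≤ TT) (s : Fin N) (a : Fin (k s)),
      xsa M (polx M hk x hx) t s a = x.1 ⟨t, Nat.lt_succ_of_le h⟩ s a := by
    intro t h s a
    have hpos : 0 < ∑ a', x.1 ⟨t, Nat.lt_succ_of_le h⟩ s a' :=
      ysum_polx M hreg hk x hx t h s ▸ ysum_pos M hreg _ t (by omega) s
    rw [xsa_eq, polx_q_pos M hk x hx h hpos a, ysum_polx M hreg hk x hx t h s]
    rw [mul_div_assoc']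
    exact mul_div_cancel_left₀ _ (ne_of_gt hpos)
  refine Prod.ext ?_ ?_
  · funext t s a
    show xsa M (polx M hk x hx) (t : ℕ) s a = x.1 t s a
    exact hxsa (t : ℕ) (Nat.lt_succ_iff.mp t.isLt) s a
  · funext s
    show xT M (polx M hk x hx) s = x.2 s
    rw [xT_eq_ysum, ysum_succ, hx.2.2.2.2 s]
    refine Finset.sum_congr rfl fun s' _ => Finset.sum_congr rfl fun a _ => ?_
    rw [hxsa TT le_rfl s' a]
    rfl
end Aux4
section Aux5
variable {N TT : ℕ} {k : Fin N → ℕ}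

lemma det_unique (M : MDP N (TT+2) k) (π : Policy N k) (hdet : Deterministic k TT π)
    (w : FreqSpace N k TT) (hw : inP M w)
    (hvan : ∀ (t : Fin (TT+1)) (s : Fin N) (a : Fin (k s)),
      xsa M π (t : ℕ) s a = 0 → w.1 t s a = 0) :
    w = xvec M π := by
  have hq0 : ∀ (t : ℕ), t ≤ TT → ∀ s, ∃ a0, π.q t s a0 = 1 ∧
      ∀ a, a ≠ a0 → π.q t s a = 0 := by
    intro t ht s
    obtain ⟨a0, ha0⟩ := hdet t s ht
    refine ⟨a0, ha0, fun a ha => ?_⟩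
    have hsum : ∑ a ∈ Finset.univ.erase a0, π.q t s a = 0 := by
      have h := Finset.sum_erase_add Finset.univ (π.q t s) (Finset.mem_univ a0)
      rw [π.q_sum, ha0] at h
      linarith
    exact (Finset.sum_eq_zero_iff_of_nonneg (fun a _ => π.q_nonneg t s a)).mp hsum a
      (Finset.mem_erase.mpr ⟨ha, Finset.mem_univ a⟩)
  have entry : ∀ (t : ℕ) (ht : t ≤ TT),
      (∀ s, ∑ a, w.1 ⟨t, Nat.lt_succ_of_le ht⟩ s a = ysum M π t s) →
      ∀ s a, w.1 ⟨t, Nat.lt_succ_of_le ht⟩ s a = xsa M π t s a := by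
    intro t ht hrow s a
    obtain ⟨a0, h1, h0⟩ := hq0 t ht s
    have hz : ∀ a', a' ≠ a0 → w.1 ⟨t, Nat.lt_succ_of_le ht⟩ s a' = 0 := fun a' ha' =>
      hvan _ s a' (by rw [xsa_eq, h0 a' ha', mul_zero])
    by_cases ha : a = a0
    · subst ha
      calc w.1 ⟨t, Nat.lt_succ_of_le ht⟩ s a
          = ∑ a', w.1 ⟨t, Nat.lt_succ_of_le ht⟩ s a' :=
            (Finset.sum_eq_single_of_mem a (Finset.mem_univ a)
              (fun b _ hb => hz b hb)).symm
        _ = ysum M π t s := hrow s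
        _ = xsa M π t s a := by rw [xsa_eq, h1, mul_one]
    · rw [hz a ha, xsa_eq, h0 a ha, mul_zero]
  have rowsum : ∀ (t : ℕ) (ht : t ≤ TT) (s : Fin N),
      ∑ a, w.1 ⟨t, Nat.lt_succ_of_le ht⟩ s a = ysum M π t s := by
    intro t
    induction t with
    | zero =>
      intro ht s
      rw [ysum_zero, ← hw.2.2.1 s]
      rfl
    | succ t ih =>
      intro ht s
      have htt : t ≤ TT := Nat.le_of_succ_le ht
      have he := entry t htt (ih htt)
      have hflow : ∑ a, w.1 ⟨t+1, Nat.lt_succ_of_le ht⟩ s a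
          = ∑ s', ∑ a, M.p t s' a s * w.1 ⟨t, Nat.lt_succ_of_le htt⟩ s' a :=
        hw.2.2.2.1 ⟨t, Nat.lt_of_succ_le ht⟩ s
      rw [hflow, ysum_succ]
      refine Finset.sum_congr rfl fun s' _ => Finset.sum_congr rfl fun a _ => ?_
      rw [he s' a]
  refine Prod.ext ?_ ?_
  · funext t s a
    show w.1 t s a = xsa M π (t : ℕ) s a
    exact entry (t : ℕ) (Nat.lt_succ_iff.mp t.isLt) (rowsum _ (Nat.lt_succ_iff.mp t.isLt)) s a
  · funext s
    show w.2 s = xT M π s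
    rw [hw.2.2.2.2 s, xT_eq_ysum, ysum_succ]
    refine Finset.sum_congr rfl fun s' _ => Finset.sum_congr rfl fun a _ => ?_
    have : w.1 (Fin.last TT) s' a = xsa M π TT s' a :=
      entry TT le_rfl (rowsum TT le_rfl) s' a
    rw [this]
end Aux5
section Aux6
variable {N TT : ℕ} {k : Fin N → ℕ}

/-- Perturbation of a policy at a single (epoch, state) pair, shifting mass `ε`
from action `a2` to action `a1`. -/
def pert (π : Policy N k) (t₀ : ℕ) (s₀ : Fin N) (a1 a2 : Fin (k s₀)) (hne : a1 ≠ a2)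
    (ε : ℝ) (h1 : 0 ≤ π.q t₀ s₀ a1 + ε) (h2 : 0 ≤ π.q t₀ s₀ a2 - ε) : Policy N k where
  q := fun t s a =>
    if t = t₀ ∧ s = s₀ then
      π.q t s a + (if (a : ℕ) = (a1 : ℕ) then ε else 0)
        - (if (a : ℕ) = (a2 : ℕ) then ε else 0)
    else π.q t s a
  q_nonneg := by
    intro t s a
    by_cases h : t = t₀ ∧ s = s₀
    · rw [if_pos h]
      obtain ⟨ht, hs⟩ := h
      subst ht; subst hs
      by_cases ha1 : a = a1
      · subst ha1
        rw [if_pos rfl, if_neg (by simpa [Fin.val_eq_val] using hne)]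
        simpa using h1
      · rw [if_neg (by simpa [Fin.val_eq_val] using ha1)]
        by_cases ha2 : a = a2
        · subst ha2
          rw [if_pos rfl]
          simpa using h2
        · rw [if_neg (by simpa [Fin.val_eq_val] using ha2)]
          simpa using π.q_nonneg _ _ a
    · rw [if_neg h]
      exact π.q_nonneg t s a
  q_sum := by
    intro t s
    by_cases h : t = t₀ ∧ s = s₀
    · simp only [if_pos h]
      obtain ⟨ht, hs⟩ := h
      subst ht; subst hs
      rw [Finset.sum_sub_distrib, Finset.sum_add_distrib, π.q_sum]
      simp [Fin.val_eq_val, Finset.sum_ite_eq']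
    · simp only [if_neg h]
      exact π.q_sum t s

lemma pert_q_eq (π : Policy N k) (t₀ : ℕ) (s₀ : Fin N) (a1 a2 : Fin (k s₀)) (hne : a1 ≠ a2)
    (ε : ℝ) (h1 : 0 ≤ π.q t₀ s₀ a1 + ε) (h2 : 0 ≤ π.q t₀ s₀ a2 - ε)
    (t : ℕ) (s : Fin N) (hts : ¬(t = t₀ ∧ s = s₀)) (a : Fin (k s)) :
    (pert π t₀ s₀ a1 a2 hne ε h1 h2).q t s a = π.q t s a := by
  simp only [pert, if_neg hts]

lemma pert_q_row (π : Policy N k) (t₀ : ℕ) (s₀ : Fin N) (a1 a2 : Fin (k s₀)) (hne : a1 ≠ a2)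
    (ε : ℝ) (h1 : 0 ≤ π.q t₀ s₀ a1 + ε) (h2 : 0 ≤ π.q t₀ s₀ a2 - ε) (a : Fin (k s₀)) :
    (pert π t₀ s₀ a1 a2 hne ε h1 h2).q t₀ s₀ a
      = π.q t₀ s₀ a + (if a = a1 then ε else 0) - (if a = a2 then ε else 0) := by
  simp [pert, Fin.val_eq_val]
end Aux6

/-- for a regular process, deterministic policies map to vertices (extreme
points) of the state-action frequency polytope, and conversely every vertex arises as
`x_π` for a (regular) deterministic policy `π = π^x`. -/
theorem deterministic_iff_vertex (N TT : ℕ) (k : Fin N → ℕ) (hk : ∀ s, 1 ≤ k s)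
    (M : MDP N (TT+2) k) (hreg : RegularProcess M) :
    (∀ π : Policy N k, Deterministic k TT π →
        xvec M π ∈ Set.extremePoints ℝ (Pset M)) ∧
      (∀ x ∈ Set.extremePoints ℝ (Pset M), ∃ π : Policy N k,
        RegularPol M hk π ∧ Deterministic k TT π ∧ xvec M π = x) := by
  constructor
  · -- deterministic ⇒ extreme point
    intro π hdet
    refine ⟨xvec_mem M π, fun y hy z hz hseg => ?_⟩
    obtain ⟨c, d, hc, hd, hcd, heq⟩ := hseg
    have hyP : inP M y := hy
    have hzP : inP M z := hz
    have hcomp : ∀ (t : Fin (TT+1)) (s : Fin N) (a : Fin (k s)),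
        c * y.1 t s a + d * z.1 t s a = xsa M π (t : ℕ) s a := by
      intro t s a
      have h := congrFun (congrFun (congrFun (congrArg Prod.fst heq) t) s) a
      simpa [xvec] using h
    have hyvan : ∀ (t : Fin (TT+1)) (s : Fin N) (a : Fin (k s)),
        xsa M π (t : ℕ) s a = 0 → y.1 t s a = 0 := by
      intro t s a hx0
      have h := hcomp t s a
      rw [hx0] at h
      have h1 := hyP.1 t s a
      have h2 := hzP.1 t s a
      nlinarith
    have hzvan : ∀ (t : Fin (TT+1)) (s : Fin N) (a : Fin (k s)),
        xsa M π (t : ℕ) s a = 0 → z.1 t s a = 0 := by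
      intro t s a hx0
      have h := hcomp t s a
      rw [hx0] at h
      have h1 := hyP.1 t s a
      have h2 := hzP.1 t s a
      nlinarith
    exact det_unique M π hdet y hyP hyvan
  · -- extreme point ⇒ deterministic regular policy
    intro x hx
    have hxP : inP M x := hx.1
    have hxv := xvec_polx M hreg hk x hxP
    refine ⟨polx M hk x hxP, ?_, ?_, hxv⟩
    · intro t s ht hall
      obtain ⟨j, hj⟩ := hreg (polx M hk x hxP) t s (by omega)
      exact absurd (hall j) (ne_of_gt hj)
    · intro t s ht
      by_contra hno
      push_neg at hno
      set π := polx M hk x hxP with hπ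
      have hq1sum : ∑ a, π.q t s a = 1 := π.q_sum t s
      have hex1 : ∃ a1, 0 < π.q t s a1 := by
        by_contra hop
        push_neg at hop
        have h := Finset.sum_nonpos (fun a (_ : a ∈ Finset.univ) => hop a)
        rw [hq1sum] at h
        linarith
      obtain ⟨a1, ha1⟩ := hex1
      have hle : π.q t s a1 ≤ 1 := by
        have h := Finset.single_le_sum (f := π.q t s)
          (fun a _ => π.q_nonneg t s a) (Finset.mem_univ a1)
        rw [hq1sum] at h
        exact h
      have hrest : 0 < ∑ a ∈ Finset.univ.erase a1, π.q t s a := by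
        have h := Finset.sum_erase_add Finset.univ (π.q t s) (Finset.mem_univ a1)
        rw [hq1sum] at h
        have : π.q t s a1 < 1 := lt_of_le_of_ne hle (hno a1)
        linarith
      have hex2 : ∃ a2 ∈ Finset.univ.erase a1, 0 < π.q t s a2 := by
        by_contra hop
        push_neg at hop
        have h := Finset.sum_nonpos hop
        linarith
      obtain ⟨a2, ha2mem, ha2⟩ := hex2
      have hne : a1 ≠ a2 := fun h => (Finset.mem_erase.mp ha2mem).1 h.symm
      have h1p : 0 ≤ π.q t s a1 + π.q t s a2 := by linarith
      have h2p : 0 ≤ π.q t s a2 - π.q t s a2 := by linarith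
      have h1m : 0 ≤ π.q t s a1 + -π.q t s a1 := by linarith
      have h2m : 0 ≤ π.q t s a2 - -π.q t s a1 := by linarith
      have hsum12 : 0 < π.q t s a1 + π.q t s a2 := by linarith
      have hθ : π.q t s a1 / (π.q t s a1 + π.q t s a2)
          + π.q t s a2 / (π.q t s a1 + π.q t s a2) = 1 := by
        field_simp
      have hθp : 0 < π.q t s a1 / (π.q t s a1 + π.q t s a2) := div_pos ha1 hsum12
      have hθm : 0 < π.q t s a2 / (π.q t s a1 + π.q t s a2) := div_pos ha2 hsum12
      have hagree : ∀ u s', ¬(u = t ∧ s' = s) → ∀ a,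
          π.q u s' a = (pert π t s a1 a2 hne (π.q t s a2) h1p h2p).q u s' a ∧
          π.q u s' a = (pert π t s a1 a2 hne (-π.q t s a1) h1m h2m).q u s' a :=
        fun u s' h a => ⟨(pert_q_eq π t s a1 a2 hne _ h1p h2p u s' h a).symm,
          (pert_q_eq π t s a1 a2 hne _ h1m h2m u s' h a).symm⟩
      have hrow : ∀ a, π.q t s a
          = (π.q t s a1 / (π.q t s a1 + π.q t s a2))
              * (pert π t s a1 a2 hne (π.q t s a2) h1p h2p).q t s a
            + (π.q t s a2 / (π.q t s a1 + π.q t s a2))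
              * (pert π t s a1 a2 hne (-π.q t s a1) h1m h2m).q t s a := by
        intro a
        rw [pert_q_row, pert_q_row]
        by_cases hA1 : a = a1
        · subst hA1
          rw [if_pos rfl, if_pos rfl, if_neg hne, if_neg hne]
          rw [div_mul_eq_mul_div, div_mul_eq_mul_div, ← add_div,
            eq_div_iff (ne_of_gt hsum12)]
          ring
        · rw [if_neg hA1, if_neg hA1]
          by_cases hA2 : a = a2
          · subst hA2
            rw [if_pos rfl, if_pos rfl]
            rw [div_mul_eq_mul_div, div_mul_eq_mul_div, ← add_div,
              eq_div_iff (ne_of_gt hsum12)]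
            ring
          · rw [if_neg hA2, if_neg hA2]
            simp only [add_zero, sub_zero]
            rw [div_mul_eq_mul_div, div_mul_eq_mul_div, ← add_div,
              eq_div_iff (ne_of_gt hsum12)]
            ring
      have hcomb := xvec_combine M π (pert π t s a1 a2 hne (π.q t s a2) h1p h2p)
        (pert π t s a1 a2 hne (-π.q t s a1) h1m h2m) t s _ _ hθ hagree hrow
      have hseg : x ∈ openSegment ℝ
          (xvec M (pert π t s a1 a2 hne (π.q t s a2) h1p h2p))
          (xvec M (pert π t s a1 a2 hne (-π.q t s a1) h1m h2m)) :=
        ⟨_, _, hθp, hθm, hθ, by rw [← hcomb, hxv]⟩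
      have hp_eq := hx.2 (xvec_mem M _) (xvec_mem M _) hseg
      have htlt : t < TT + 1 := Nat.lt_succ_of_le ht
      have hzero : (xvec (TT := TT) M
          (pert π t s a1 a2 hne (π.q t s a2) h1p h2p)).1 ⟨t, htlt⟩ s a2 = 0 := by
        show xsa M (pert π t s a1 a2 hne (π.q t s a2) h1p h2p) t s a2 = 0
        rw [xsa_eq, pert_q_row, if_neg (Ne.symm hne), if_pos rfl]
        ring
      have hposx : 0 < (xvec (TT := TT) M π).1 ⟨t, htlt⟩ s a2 := by
        show 0 < xsa M π t s a2
        rw [xsa_eq]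
        exact mul_pos (ysum_pos M hreg π t (by omega) s) ha2
      rw [hp_eq, ← hxv] at hzero
      exact absurd hzero (ne_of_gt hposx)
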